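/- Let k ≤ n and s be positive integers, and let S ⊆ Gr(k,n) be a finite set of k-dimensional subspaces of ℝ^n such that the Fubini–Study distances between distinct elements of S take values in {a_1, …, a_s} ⊆ (0, π/2]. For each U ∈ S (with orthonormal basis matrix U ∈ ℝ^{n×k}) define f_U(X) := ∏_{i=1}^s (det(UᵀX)² − cos²(a_i)) for X ∈ ℝ^{n×k} with orthonormal columns. Then the functions {f_U : U ∈ S} are linearly independent, and hence |S| is bounded by the dimension of the space of functions on Gr(k,n) that are restrictions of polynomials of even degree between 2 and 2s in the Plücker coordinates. -/

import Mathlib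

open Matrix Real

/-- The Stiefel-type domain: `n × k` matrices with orthonormal columns. -/
def OrthFrame (n k : ℕ) : Type := {X : Matrix (Fin n) (Fin k) ℝ // Xᵀ * X = 1}

/-- The Plücker coordinate of a frame indexed by a `k`-subset `I` of `[n]`
(zero for subsets of the wrong cardinality). -/
noncomputable def pluecker (n k : ℕ) (I : Finset (Fin n)) (X : OrthFrame n k) : ℝ :=
  if h : I.card = k then
    (X.1.submatrix (fun a : Fin k => ((I.orderIsoOfFin h) a : Fin n)) id).det
  else 0

/-- The space of functions on frames that are evaluations of homogeneous polynomials of even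
degree `2d`, `1 ≤ d ≤ s`, in the Plücker coordinates. -/
noncomputable def plueckerSpan (n k s : ℕ) : Submodule ℝ (OrthFrame n k → ℝ) :=
  Submodule.span ℝ {g : OrthFrame n k → ℝ |
    ∃ p : MvPolynomial (Finset (Fin n)) ℝ,
      (∃ d, 1 ≤ d ∧ d ≤ s ∧ p.IsHomogeneous (2 * d)) ∧
      g = fun X => MvPolynomial.eval (fun I => pluecker n k I X) p}

section CauchyBinet

open Finset Equiv Equiv.Perm

variable {k n : ℕ}

lemma cb_aux (A : Matrix (Fin k) (Fin n) ℝ) (B : Matrix (Fin n) (Fin k) ℝ)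
    {p : Fin k → Fin n} (H : ¬Function.Injective p) :
    (∑ σ : Perm (Fin k), ((sign σ : ℤ) : ℝ) * ∏ x, A (σ x) (p x) * B (p x) x) = 0 := by
  obtain ⟨i, j, hpij, hij⟩ : ∃ i j, p i = p j ∧ i ≠ j := by
    rw [Function.Injective] at H; push_neg at H
    obtain ⟨i, j, h1, h2⟩ := H; exact ⟨i, j, h1, h2⟩
  exact
    Finset.sum_involution (fun σ _ => σ * Equiv.swap i j)
      (fun σ _ => by
        have : (∏ x, A (σ x) (p x)) = ∏ x, A ((σ * Equiv.swap i j) x) (p x) :=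
          Fintype.prod_equiv (swap i j) _ _ (by simp [apply_swap_eq_self hpij])
        simp [this, sign_swap hij, -sign_swap', prod_mul_distrib])
      (fun σ _ _ => (not_congr mul_swap_eq_iff).mpr hij) (fun _ _ => Finset.mem_univ _)
      fun σ _ => mul_swap_involutive i j σ

lemma cb_sq (M N : Matrix (Fin k) (Fin k) ℝ) :
    ∑ τ : Perm (Fin k), ∑ σ : Perm (Fin k),
      ((sign σ : ℤ) : ℝ) * ∏ i, M (σ i) (τ i) * N (τ i) i = det M * det N := by
  rw [← det_mul]
  symm
  calc
    det (M * N) = ∑ p : Fin k → Fin k, ∑ σ : Perm (Fin k),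
        ((sign σ : ℤ) : ℝ) * ∏ i, M (σ i) (p i) * N (p i) i := by
      simp only [det_apply', Matrix.mul_apply, prod_univ_sum, mul_sum, Fintype.piFinset_univ]
      rw [Finset.sum_comm]
    _ = ∑ p : Fin k → Fin k with Function.Bijective p, ∑ σ : Perm (Fin k),
        ((sign σ : ℤ) : ℝ) * ∏ i, M (σ i) (p i) * N (p i) i := by
      refine (Finset.sum_subset (filter_subset _ _) fun f _ hbij ↦ det_mul_aux ?_).symm
      simpa only [true_and, mem_filter, mem_univ] using hbij
    _ = ∑ τ : Perm (Fin k), ∑ σ : Perm (Fin k),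
        ((sign σ : ℤ) : ℝ) * ∏ i, M (σ i) (τ i) * N (τ i) i :=
      Finset.sum_bij (fun p h ↦ Equiv.ofBijective p (mem_filter.1 h).2) (fun _ _ ↦ mem_univ _)
        (fun _ _ _ _ h ↦ by injection h)
        (fun b _ ↦ ⟨b, mem_filter.2 ⟨mem_univ _, b.bijective⟩, coe_fn_injective rfl⟩)
        fun _ _ ↦ rfl

lemma cauchy_binet (A : Matrix (Fin k) (Fin n) ℝ) (B : Matrix (Fin n) (Fin k) ℝ) :
    (A * B).det = ∑ I : {I : Finset (Fin n) // I.card = k},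
      (A.submatrix id (fun a => ((I.1.orderIsoOfFin I.2) a : Fin n))).det *
      (B.submatrix (fun a => ((I.1.orderIsoOfFin I.2) a : Fin n)) id).det := by
  classical
  set G : (Σ _I : {I : Finset (Fin n) // I.card = k}, Perm (Fin k)) → (Fin k → Fin n) :=
    fun x i => ((x.1.1.orderIsoOfFin x.1.2) (x.2 i) : Fin n) with hG
  set F : (Fin k → Fin n) → ℝ := fun p =>
    ∑ σ : Perm (Fin k), ((sign σ : ℤ) : ℝ) * ∏ i, A (σ i) (p i) * B (p i) i with hF
  have himg : ∀ x, Finset.image (G x) Finset.univ = x.1.1 := by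
    rintro ⟨⟨I, hI⟩, τ⟩
    ext y
    simp only [Finset.mem_image, Finset.mem_univ, true_and, hG]
    constructor
    · rintro ⟨i, rfl⟩; exact coe_mem _
    · intro hy
      exact ⟨τ.symm ((I.orderIsoOfFin hI).symm ⟨y, hy⟩), by simp⟩
  have hGinj : Function.Injective G := by
    rintro ⟨⟨I, hI⟩, τ⟩ ⟨⟨J, hJ⟩, τ'⟩ h
    have h1 : Finset.image (G ⟨⟨I, hI⟩, τ⟩) Finset.univ = I := himg _
    have h2 : Finset.image (G ⟨⟨J, hJ⟩, τ'⟩) Finset.univ = J := himg _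
    have hIJ : I = J := by rw [← h1, h, h2]
    subst hIJ
    have hττ' : τ = τ' := by
      refine Equiv.ext fun i => ?_
      have hcf := congrFun h i
      simp only [hG] at hcf
      exact (Finset.orderIsoOfFin I hI).injective (Subtype.coe_injective hcf)
    subst hττ'
    rfl
  have hGsurj : ∀ p : Fin k → Fin n, Function.Injective p → ∃ x, G x = p := by
    intro p hp
    have hI : (Finset.image p Finset.univ).card = k := by
      rw [Finset.card_image_of_injective _ hp, Finset.card_univ, Fintype.card_fin]
    set I := Finset.image p Finset.univ
    have hmem : ∀ i, p i ∈ I := fun i => Finset.mem_image_of_mem p (Finset.mem_univ i)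
    set q : Fin k → Fin k := fun i => (I.orderIsoOfFin hI).symm ⟨p i, hmem i⟩ with hq
    have hqinj : Function.Injective q := by
      intro i j hij
      apply hp
      have := congrArg (fun z => ((I.orderIsoOfFin hI) z : Fin n)) hij
      simpa [hq] using this
    refine ⟨⟨⟨I, hI⟩, Equiv.ofBijective q ((Finite.injective_iff_bijective).mp hqinj)⟩, ?_⟩
    funext i
    show ((I.orderIsoOfFin hI) ((Equiv.ofBijective q ((Finite.injective_iff_bijective).mp hqinj)) i) : Fin n) = p i
    show ((I.orderIsoOfFin hI) ((I.orderIsoOfFin hI).symm ⟨p i, hmem i⟩) : Fin n) = p i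
    rw [OrderIso.apply_symm_apply]
  calc
    (A * B).det = ∑ p : Fin k → Fin n, F p := by
      simp only [hF, det_apply', Matrix.mul_apply, prod_univ_sum, mul_sum, Fintype.piFinset_univ]
      rw [Finset.sum_comm]
    _ = ∑ p ∈ Finset.image G Finset.univ, F p := by
      refine (Finset.sum_subset (Finset.subset_univ _) fun p _ hp => ?_).symm
      by_cases hinj : Function.Injective p
      · obtain ⟨x, rfl⟩ := hGsurj p hinj
        exact absurd (Finset.mem_image_of_mem G (Finset.mem_univ x)) hp
      · exact cb_aux A B hinj
    _ = ∑ x : (Σ _I : {I : Finset (Fin n) // I.card = k}, Perm (Fin k)), F (G x) :=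
      Finset.sum_image fun x _ y _ h => hGinj h
    _ = ∑ I : {I : Finset (Fin n) // I.card = k}, ∑ τ : Perm (Fin k), F (G ⟨I, τ⟩) :=
      Finset.sum_sigma _ _ _
    _ = _ := by
      refine Finset.sum_congr rfl fun I _ => ?_
      rw [← cb_sq]
      rfl

/-- key expansion: the determinant `det (Yᵀ X)` is a linear form in the Plücker coordinates. -/
lemma det_eq_sum_pluecker (Y : Matrix (Fin n) (Fin k) ℝ) (X : OrthFrame n k) :
    (Yᵀ * X.1).det = ∑ I : {I : Finset (Fin n) // I.card = k},
      (Yᵀ.submatrix id (fun a => ((I.1.orderIsoOfFin I.2) a : Fin n))).det *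
        pluecker n k I.1 X := by
  rw [cauchy_binet]
  refine Finset.sum_congr rfl fun I _ => ?_
  rw [pluecker, dif_pos I.2]

/-- the sum of squares of Plücker coordinates of an orthonormal frame is 1. -/
lemma sum_pluecker_sq (X : OrthFrame n k) :
    ∑ I : {I : Finset (Fin n) // I.card = k}, (pluecker n k I.1 X) ^ 2 = 1 := by
  have h := cauchy_binet (X.1)ᵀ X.1
  rw [X.2, det_one] at h
  refine Eq.trans (Finset.sum_congr rfl fun I _ => ?_) h.symm
  rw [pluecker, dif_pos I.2, sq]
  congr 1
  rw [← Matrix.det_transpose (X.1.submatrix _ id), Matrix.transpose_submatrix]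

end CauchyBinet

theorem stmt10 (n k s m : ℕ) (hk : 1 ≤ k) (hkn : k ≤ n) (hs : 1 ≤ s)
    (U : Fin m → Matrix (Fin n) (Fin k) ℝ)
    (horth : ∀ i, (U i)ᵀ * U i = 1)
    (hinj : Function.Injective fun i => U i * (U i)ᵀ)
    (a : Fin s → ℝ) (ha : ∀ t, a t ∈ Set.Ioc 0 (π / 2))
    (hFS : ∀ i j, i ≠ j → ∃ t, Real.arccos |((U i)ᵀ * U j).det| = a t)
    (f : Fin m → (OrthFrame n k → ℝ))
    (hf : f = fun i X => ∏ t, (((U i)ᵀ * X.1).det ^ 2 - Real.cos (a t) ^ 2)) :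
    LinearIndependent ℝ f ∧ m ≤ Module.finrank ℝ (plueckerSpan n k s) := by
  classical
  -- basic facts about the distances
  have hcos0 : ∀ t, 0 ≤ Real.cos (a t) := fun t =>
    Real.cos_nonneg_of_mem_Icc ⟨by linarith [(ha t).1, Real.pi_pos], (ha t).2⟩
  have hcos1 : ∀ t, Real.cos (a t) < 1 := by
    intro t
    have := Real.cos_lt_cos_of_nonneg_of_le_pi (le_refl (0:ℝ))
      (le_trans (ha t).2 (by linarith [Real.pi_pos])) (ha t).1
    simpa using this
  -- diagonal values
  have hdiag : ∀ i, f i ⟨U i, horth i⟩ ≠ 0 := by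
    intro i
    rw [hf]
    simp only
    have h1 : ((U i)ᵀ * U i).det = 1 := by rw [horth i, det_one]
    rw [h1]
    have : (0:ℝ) < ∏ t, ((1:ℝ) ^ 2 - Real.cos (a t) ^ 2) := by
      refine Finset.prod_pos fun t _ => ?_
      have : Real.cos (a t) ^ 2 < 1 := by
        nlinarith [hcos0 t, hcos1 t]
      nlinarith
    exact ne_of_gt this
  -- off-diagonal vanishing
  have hoff : ∀ i j, i ≠ j → f i ⟨U j, horth j⟩ = 0 := by
    intro i j hij
    rw [hf]
    simp only
    obtain ⟨t, ht⟩ := hFS i j hij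
    refine Finset.prod_eq_zero (Finset.mem_univ t) ?_
    have hsq : ((U i)ᵀ * U j).det ^ 2 = Real.cos (a t) ^ 2 := by
      set d := ((U i)ᵀ * U j).det
      by_cases hle : |d| ≤ 1
      · have hc : Real.cos (a t) = |d| := by
          rw [← ht, Real.cos_arccos (le_trans (by norm_num) (abs_nonneg d)) hle]
        rw [hc, sq_abs]
      · exfalso
        have : Real.arccos |d| = 0 := Real.arccos_eq_zero.mpr (le_of_not_ge hle)
        rw [ht] at this
        exact absurd this (ne_of_gt (ha t).1)
    rw [hsq, sub_self]
  -- linear independence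
  have hLI : LinearIndependent ℝ f := by
    rw [Fintype.linearIndependent_iff]
    intro c hc j
    have hev := congrFun hc (⟨U j, horth j⟩ : OrthFrame n k)
    have hev' : ∑ i, c i * f i ⟨U j, horth j⟩ = 0 := by
      exact (Finset.sum_apply _ _ _).symm.trans hev
    rw [Finset.sum_eq_single j (fun i _ hij => by rw [hoff i j hij, mul_zero])
      (fun h => absurd (Finset.mem_univ j) h)] at hev'
    exact (mul_eq_zero.mp hev').resolve_right (hdiag j)
  refine ⟨hLI, ?_⟩
  -- each f i is the evaluation of a homogeneous polynomial of degree 2s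
  set T := {I : Finset (Fin n) // I.card = k}
  set Q : MvPolynomial (Finset (Fin n)) ℝ :=
    ∑ I : T, (MvPolynomial.X I.1) ^ 2 with hQ
  have hQhom : Q.IsHomogeneous 2 :=
    MvPolynomial.IsHomogeneous.sum _ _ _ fun I _ => MvPolynomial.isHomogeneous_X_pow _ _
  have hQeval : ∀ X : OrthFrame n k,
      MvPolynomial.eval (fun I => pluecker n k I X) Q = 1 := by
    intro X
    rw [hQ]
    simp only [map_sum, map_pow, MvPolynomial.eval_X]
    exact sum_pluecker_sq X
  set L : Fin m → MvPolynomial (Finset (Fin n)) ℝ := fun i =>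
    ∑ I : T, MvPolynomial.C
      (((U i)ᵀ.submatrix id (fun a => ((I.1.orderIsoOfFin I.2) a : Fin n))).det) *
      MvPolynomial.X I.1 with hL
  have hLhom : ∀ i, (L i).IsHomogeneous 1 := fun i =>
    MvPolynomial.IsHomogeneous.sum _ _ _ fun I _ => MvPolynomial.isHomogeneous_C_mul_X _ _
  have hLeval : ∀ i (X : OrthFrame n k),
      MvPolynomial.eval (fun I => pluecker n k I X) (L i) = ((U i)ᵀ * X.1).det := by
    intro i X
    rw [hL, det_eq_sum_pluecker]
    simp only [map_sum, _root_.map_mul, MvPolynomial.eval_C, MvPolynomial.eval_X]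
    rfl
  set P : Fin m → MvPolynomial (Finset (Fin n)) ℝ := fun i =>
    ∏ t : Fin s, ((L i) ^ 2 - MvPolynomial.C (Real.cos (a t) ^ 2) * Q) with hP
  have hPhom : ∀ i, (P i).IsHomogeneous (2 * s) := by
    intro i
    have h2 : ∀ t : Fin s, ((L i) ^ 2 - MvPolynomial.C (Real.cos (a t) ^ 2) * Q).IsHomogeneous 2 := by
      intro t
      refine MvPolynomial.IsHomogeneous.sub ?_ (MvPolynomial.IsHomogeneous.C_mul hQhom _)
      simpa using (hLhom i).pow 2
    have hmain := MvPolynomial.IsHomogeneous.prod Finset.univ _ (fun _ : Fin s => 2) fun t _ => h2 t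
    have h2s : (∑ _t : Fin s, 2) = 2 * s := by
      simp [Finset.sum_const, mul_comm]
    rw [hP, ← h2s]
    exact hmain
  have hPeval : ∀ i, f i = fun X =>
      MvPolynomial.eval (fun I => pluecker n k I X) (P i) := by
    intro i
    funext X
    rw [hP]
    simp only [map_prod, map_sub, _root_.map_mul, map_pow, MvPolynomial.eval_C]
    rw [hf]
    simp only
    refine Finset.prod_congr rfl fun t _ => ?_
    rw [hLeval, hQeval, mul_one]
  have hmem : ∀ i, f i ∈ plueckerSpan n k s := by
    intro i
    refine Submodule.subset_span ⟨P i, ⟨s, hs, le_refl s, hPhom i⟩, hPeval i⟩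
  -- finite dimensionality via the evaluation map
  set E : MvPolynomial (Finset (Fin n)) ℝ →ₗ[ℝ] (OrthFrame n k → ℝ) :=
    { toFun := fun p X => MvPolynomial.eval (fun I => pluecker n k I X) p
      map_add' := fun p q => by funext X; simp [map_add]
      map_smul' := fun c p => by funext X; simp [MvPolynomial.smul_eval] } with hE
  set W := MvPolynomial.restrictTotalDegree (Finset (Fin n)) ℝ (2 * s) with hW
  have hle : plueckerSpan n k s ≤ W.map E := by
    rw [plueckerSpan, Submodule.span_le]
    rintro g ⟨p, ⟨d, hd1, hd2, hp⟩, rfl⟩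
    have hpW : p ∈ W := by
      rw [hW, MvPolynomial.mem_restrictTotalDegree]
      exact le_trans hp.totalDegree_le (by omega)
    exact ⟨p, hpW, rfl⟩
  haveI : FiniteDimensional ℝ W := by
    rw [hW]; infer_instance
  haveI : FiniteDimensional ℝ (W.map E) := inferInstance
  haveI : FiniteDimensional ℝ (plueckerSpan n k s) :=
    Submodule.finiteDimensional_of_le hle
  -- conclude
  set g : Fin m → plueckerSpan n k s := fun i => ⟨f i, hmem i⟩ with hg
  have hgLI : LinearIndependent ℝ g := by
    apply LinearIndependent.of_comp (plueckerSpan n k s).subtype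
    convert hLI
    rfl
  have := hgLI.fintype_card_le_finrank
  simpa using this
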